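/- In the presented group ⟨x, y, z ∣ x² = y² = z² = 1, xyx = yxy, yzy = zyz, zxz = xzx⟩, each of the elements Q_X = x·y·z·x, Q_Y = y·z·x·y and Q_Z = z·x·y·z has order exactly 3. -/

import Mathlib

/-- The generator `x` as an element of the free group on three generators. -/
def xGen : FreeGroup (Fin 3) := FreeGroup.of 0

/-- The generator `y` as an element of the free group on three generators. -/
def yGen : FreeGroup (Fin 3) := FreeGroup.of 1

/-- The generator `z` as an element of the free group on three generators. -/
def zGen : FreeGroup (Fin 3) := FreeGroup.of 2

/-- Relators for the group ⟨x, y, z ∣ x² = y² = z² = 1,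
xyx = yxy, yzy = zyz, zxz = xzx⟩ (the relations (7.1) of the paper). -/
def rels3 : Set (FreeGroup (Fin 3)) :=
  {xGen ^ 2, yGen ^ 2, zGen ^ 2,
   (xGen * yGen * xGen) * (yGen * xGen * yGen)⁻¹,
   (yGen * zGen * yGen) * (zGen * yGen * zGen)⁻¹,
   (zGen * xGen * zGen) * (xGen * zGen * xGen)⁻¹}

/-- The image of `x` in the presented group. -/
def X : PresentedGroup rels3 := PresentedGroup.of 0

/-- The image of `y` in the presented group. -/
def Y : PresentedGroup rels3 := PresentedGroup.of 1

/-- The image of `z` in the presented group. -/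
def Z : PresentedGroup rels3 := PresentedGroup.of 2

/-- Any relator maps to `1` in the presented group. -/
lemma rel_one {r : FreeGroup (Fin 3)} (h : r ∈ rels3) :
    (QuotientGroup.mk r : PresentedGroup rels3) = 1 :=
  (QuotientGroup.eq_one_iff r).2 (Subgroup.subset_normalClosure h)

lemma hX : X * X = 1 := by
  have h := rel_one (show xGen ^ 2 ∈ rels3 from by left; rfl)
  rw [pow_two, QuotientGroup.mk_mul] at h
  exact h

lemma hY : Y * Y = 1 := by
  have h := rel_one (show yGen ^ 2 ∈ rels3 from by right; left; rfl)
  rw [pow_two, QuotientGroup.mk_mul] at h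
  exact h

lemma hZ : Z * Z = 1 := by
  have h := rel_one (show zGen ^ 2 ∈ rels3 from by right; right; left; rfl)
  rw [pow_two, QuotientGroup.mk_mul] at h
  exact h

lemma hXYX : X * Y * X = Y * X * Y := by
  have h := rel_one (show (xGen * yGen * xGen) * (yGen * xGen * yGen)⁻¹ ∈ rels3 from by
    right; right; right; left; rfl)
  rw [QuotientGroup.mk_mul, QuotientGroup.mk_inv, mul_inv_eq_one] at h
  exact h

lemma hYZY : Y * Z * Y = Z * Y * Z := by
  have h := rel_one (show (yGen * zGen * yGen) * (zGen * yGen * zGen)⁻¹ ∈ rels3 from by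
    right; right; right; right; left; rfl)
  rw [QuotientGroup.mk_mul, QuotientGroup.mk_inv, mul_inv_eq_one] at h
  exact h

lemma hZXZ : Z * X * Z = X * Z * X := by
  have h := rel_one (show (zGen * xGen * zGen) * (xGen * zGen * xGen)⁻¹ ∈ rels3 from by
    right; right; right; right; right; rfl)
  rw [QuotientGroup.mk_mul, QuotientGroup.mk_inv, mul_inv_eq_one] at h
  exact h

-- cancellation helpers
lemma cX : ∀ w : PresentedGroup rels3, X * (X * w) = w := fun w => by
  rw [← mul_assoc, hX, one_mul]
lemma cY : ∀ w : PresentedGroup rels3, Y * (Y * w) = w := fun w => by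
  rw [← mul_assoc, hY, one_mul]
lemma cZ : ∀ w : PresentedGroup rels3, Z * (Z * w) = w := fun w => by
  rw [← mul_assoc, hZ, one_mul]

lemma bXY : ∀ w : PresentedGroup rels3, X * (Y * (X * w)) = Y * (X * (Y * w)) := fun w => by
  rw [← mul_assoc, ← mul_assoc, hXYX, mul_assoc, mul_assoc]
lemma bYZ : ∀ w : PresentedGroup rels3, Y * (Z * (Y * w)) = Z * (Y * (Z * w)) := fun w => by
  rw [← mul_assoc, ← mul_assoc, hYZY, mul_assoc, mul_assoc]
lemma bZX : ∀ w : PresentedGroup rels3, Z * (X * (Z * w)) = X * (Z * (X * w)) := fun w => by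
  rw [← mul_assoc, ← mul_assoc, hZXZ, mul_assoc, mul_assoc]

lemma QX_cube : (X * Y * Z * X) ^ 3 = 1 := by
  simp only [pow_succ, pow_zero, one_mul, mul_assoc]
  rw [cX, cX, bYZ, cZ, cY, cZ]
  exact hX

lemma QY_cube : (Y * Z * X * Y) ^ 3 = 1 := by
  simp only [pow_succ, pow_zero, one_mul, mul_assoc]
  rw [cY, cY, bZX, cX, cZ, cX]
  exact hY

lemma QZ_cube : (Z * X * Y * Z) ^ 3 = 1 := by
  simp only [pow_succ, pow_zero, one_mul, mul_assoc]
  rw [cZ, cZ, bXY, cY, cX, cY]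
  exact hZ

/-- A concrete representation into `S₃`. -/
def f3 : Fin 3 → Equiv.Perm (Fin 3) := ![Equiv.swap 0 1, Equiv.swap 1 2, Equiv.swap 0 2]

lemma lift_rels : ∀ r ∈ rels3, FreeGroup.lift f3 r = 1 := by
  intro r hr
  simp only [rels3, Set.mem_insert_iff, Set.mem_singleton_iff] at hr
  rcases hr with rfl | rfl | rfl | rfl | rfl | rfl <;>
    simp only [xGen, yGen, zGen, map_mul, map_inv, map_pow, FreeGroup.lift_apply_of, f3] <;>
    decide

/-- The induced homomorphism to `S₃`. -/
def φ : PresentedGroup rels3 →* Equiv.Perm (Fin 3) := PresentedGroup.toGroup lift_rels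

lemma φX : φ X = Equiv.swap 0 1 := by
  show (PresentedGroup.toGroup lift_rels) (PresentedGroup.of _) = _
  rw [PresentedGroup.toGroup.of]; rfl
lemma φY : φ Y = Equiv.swap 1 2 := by
  show (PresentedGroup.toGroup lift_rels) (PresentedGroup.of _) = _
  rw [PresentedGroup.toGroup.of]; rfl
lemma φZ : φ Z = Equiv.swap 0 2 := by
  show (PresentedGroup.toGroup lift_rels) (PresentedGroup.of _) = _
  rw [PresentedGroup.toGroup.of]; rfl

lemma QX_ne_one : X * Y * Z * X ≠ 1 := by
  intro h
  have h2 := congrArg φ h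
  rw [map_mul, map_mul, map_mul, map_one, φX, φY, φZ] at h2
  exact absurd h2 (by decide)

lemma QY_ne_one : Y * Z * X * Y ≠ 1 := by
  intro h
  have h2 := congrArg φ h
  rw [map_mul, map_mul, map_mul, map_one, φX, φY, φZ] at h2
  exact absurd h2 (by decide)

lemma QZ_ne_one : Z * X * Y * Z ≠ 1 := by
  intro h
  have h2 := congrArg φ h
  rw [map_mul, map_mul, map_mul, map_one, φX, φY, φZ] at h2
  exact absurd h2 (by decide)

/-- In ⟨x, y, z ∣ x² = y² = z² = 1, xyx = yxy, yzy = zyz, zxz = xzx⟩, each of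
`Q_X = xyzx`, `Q_Y = yzxy`, `Q_Z = zxyz` has order exactly 3. -/
theorem orderOf_QX_QY_QZ_eq_three :
    orderOf (X * Y * Z * X) = 3 ∧ orderOf (Y * Z * X * Y) = 3 ∧
      orderOf (Z * X * Y * Z) = 3 := by
  haveI : Fact (Nat.Prime 3) := ⟨by norm_num⟩
  exact ⟨orderOf_eq_prime QX_cube QX_ne_one,
    orderOf_eq_prime QY_cube QY_ne_one,
    orderOf_eq_prime QZ_cube QZ_ne_one⟩
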